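/- Let T be a (possibly unbounded) subnormal operator in H with normal extension N acting on K ⊇ H, let P be the orthogonal projection of K onto H, and let k be a positive integer. Then P maps D((N*)ᵏ) into D((T*)ᵏ), and P(N*)ᵏh = (T*)ᵏPh for all h ∈ D((N*)ᵏ). -/

import Mathlib

set_option maxHeartbeats 1000000 in
/-- Composition of partial linear maps with the natural (maximal) domain. -/
noncomputable def LinearPMap.pcomp {R : Type*} [Ring R] {E F G : Type*}
    [AddCommGroup E] [Module R E] [AddCommGroup F] [Module R F]
    [AddCommGroup G] [Module R G]
    (f : F →ₗ.[R] G) (g : E →ₗ.[R] F) : E →ₗ.[R] G where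
  domain :=
  { carrier := {x | ∃ hx : x ∈ g.domain, g ⟨x, hx⟩ ∈ f.domain}
    add_mem' := by
      rintro x y ⟨hx, hfx⟩ ⟨hy, hfy⟩
      refine ⟨add_mem hx hy, ?_⟩
      have : (⟨x + y, add_mem hx hy⟩ : g.domain) = ⟨x, hx⟩ + ⟨y, hy⟩ := rfl
      rw [this, g.map_add]
      exact add_mem hfx hfy
    zero_mem' := by
      refine ⟨zero_mem _, ?_⟩
      have : (⟨0, zero_mem _⟩ : g.domain) = 0 := rfl
      rw [this, g.map_zero]
      exact zero_mem _
    smul_mem' := by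
      rintro c x ⟨hx, hfx⟩
      refine ⟨g.domain.smul_mem c hx, ?_⟩
      have : (⟨c • x, g.domain.smul_mem c hx⟩ : g.domain) = c • (⟨x, hx⟩ : g.domain) := rfl
      rw [this, g.map_smul]
      exact f.domain.smul_mem c hfx }
  toFun :=
  { toFun := fun x => f ⟨g ⟨x.1, x.2.choose⟩, x.2.choose_spec⟩
    map_add' := by
      rintro ⟨x, hx⟩ ⟨y, hy⟩
      have key : ∀ (a : F) (ha : a ∈ f.domain) (b : F) (hb : b ∈ f.domain),
          a = b → f ⟨a, ha⟩ = f ⟨b, hb⟩ := by rintro a ha b hb rfl; rfl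
      have keyg : ∀ (a b : g.domain), (a : E) = (b : E) → g a = g b := by
        intro a b h; cases Subtype.ext h; rfl
      rw [← f.map_add]
      apply key
      rw [← g.map_add]
      exact keyg _ _ rfl
    map_smul' := by
      rintro c ⟨x, hx⟩
      have key : ∀ (a : F) (ha : a ∈ f.domain) (b : F) (hb : b ∈ f.domain),
          a = b → f ⟨a, ha⟩ = f ⟨b, hb⟩ := by rintro a ha b hb rfl; rfl
      have keyg : ∀ (a b : g.domain), (a : E) = (b : E) → g a = g b := by
        intro a b h; cases Subtype.ext h; rfl
      rw [← f.map_smul]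
      apply key
      rw [← g.map_smul]
      exact keyg _ _ rfl }

/-- `k`-th power of a partial linear map. -/
noncomputable def LinearPMap.ppow {R : Type*} [Ring R] {E : Type*}
    [AddCommGroup E] [Module R E] (f : E →ₗ.[R] E) : ℕ → (E →ₗ.[R] E)
  | 0 => LinearMap.id.toPMap ⊤
  | k + 1 => f.pcomp (f.ppow k)


section Helpers

variable {R : Type*} [Ring R] {E F G : Type*}
    [AddCommGroup E] [Module R E] [AddCommGroup F] [Module R F]
    [AddCommGroup G] [Module R G]

theorem LinearPMap.pmap_congr (f : E →ₗ.[R] F) {a b : E} (ha : a ∈ f.domain)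
    (hb : b ∈ f.domain) (h : a = b) : f ⟨a, ha⟩ = f ⟨b, hb⟩ := by
  cases h; rfl

theorem LinearPMap.mem_pcomp_domain_iff (f : F →ₗ.[R] G) (g : E →ₗ.[R] F) {x : E} :
    x ∈ (f.pcomp g).domain ↔ ∃ hx : x ∈ g.domain, g ⟨x, hx⟩ ∈ f.domain :=
  Iff.rfl

theorem LinearPMap.pcomp_apply (f : F →ₗ.[R] G) (g : E →ₗ.[R] F) {x : E}
    (hx : x ∈ g.domain) (hfx : g ⟨x, hx⟩ ∈ f.domain) (hmem : x ∈ (f.pcomp g).domain) :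
    f.pcomp g ⟨x, hmem⟩ = f ⟨g ⟨x, hx⟩, hfx⟩ := by
  have h1 : g ⟨x, hmem.choose⟩ = g ⟨x, hx⟩ := rfl
  exact LinearPMap.pmap_congr f _ _ h1

theorem LinearPMap.mem_ppow_zero_domain (f : E →ₗ.[R] E) (x : E) :
    x ∈ (f.ppow 0).domain :=
  Submodule.mem_top

theorem LinearPMap.ppow_zero_apply (f : E →ₗ.[R] E) {x : E} (hx : x ∈ (f.ppow 0).domain) :
    f.ppow 0 ⟨x, hx⟩ = x :=
  rfl

theorem LinearPMap.mem_ppow_succ_domain_iff (f : E →ₗ.[R] E) (k : ℕ) {x : E} :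
    x ∈ (f.ppow (k + 1)).domain ↔
      ∃ hx : x ∈ (f.ppow k).domain, f.ppow k ⟨x, hx⟩ ∈ f.domain :=
  Iff.rfl

theorem LinearPMap.ppow_succ_apply (f : E →ₗ.[R] E) (k : ℕ) {x : E}
    (hx : x ∈ (f.ppow k).domain) (hfx : f.ppow k ⟨x, hx⟩ ∈ f.domain)
    (hmem : x ∈ (f.ppow (k + 1)).domain) :
    f.ppow (k + 1) ⟨x, hmem⟩ = f ⟨f.ppow k ⟨x, hx⟩, hfx⟩ :=
  LinearPMap.pcomp_apply f (f.ppow k) hx hfx hmem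

end Helpers

open ContinuousLinearMap in
theorem stmt_17 {H K : Type*} [NormedAddCommGroup H] [InnerProductSpace ℂ H] [CompleteSpace H] [NormedAddCommGroup K] [InnerProductSpace ℂ K] [CompleteSpace K]
    (T : H →ₗ.[ℂ] H) (N : K →ₗ.[ℂ] K) (J : H →ₗᵢ[ℂ] K)
    (hTdense : Dense (T.domain : Set H)) (hNdense : Dense (N.domain : Set K))
    (hNclosed : N.IsClosed)
    (hNnormal : N.adjoint.pcomp N = N.pcomp N.adjoint)
    (hext : ∀ h : T.domain, ∃ hm : J (h : H) ∈ N.domain, N ⟨J (h : H), hm⟩ = J (T h))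
    (k : ℕ) (hk : 0 < k) :
    ∀ g : (N.adjoint.ppow k).domain,
      ∃ hm : adjoint J.toContinuousLinearMap (g : K) ∈ (T.adjoint.ppow k).domain,
        T.adjoint.ppow k ⟨adjoint J.toContinuousLinearMap (g : K), hm⟩ =
          adjoint J.toContinuousLinearMap (N.adjoint.ppow k g) := by
  classical
  set P := adjoint J.toContinuousLinearMap with hPdef
  have key : ∀ y : N.adjoint.domain,
      ∃ hm : P (y : K) ∈ T.adjoint.domain,
        T.adjoint ⟨P (y : K), hm⟩ = P (N.adjoint y) := by
    intro y
    have hinner : ∀ x : T.domain,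
        (inner ℂ (P (N.adjoint y)) (x : H) : ℂ) = inner ℂ (P (y : K)) (T x) := by
      intro x
      obtain ⟨hm, hval⟩ := hext x
      rw [hPdef, ContinuousLinearMap.adjoint_inner_left,
        ContinuousLinearMap.adjoint_inner_left]
      have h1 : (J.toContinuousLinearMap (x : H) : K) = J (x : H) := rfl
      have h2 : (J.toContinuousLinearMap (T x) : K) = J (T x) := rfl
      rw [h1, h2, ← hval]
      exact LinearPMap.adjoint_isFormalAdjoint hNdense y ⟨J (x : H), hm⟩
    have hm : P (y : K) ∈ T.adjoint.domain :=
      LinearPMap.mem_adjoint_domain_of_exists _ ⟨P (N.adjoint y), hinner⟩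
    exact ⟨hm, LinearPMap.adjoint_apply_eq hTdense ⟨P (y : K), hm⟩ hinner⟩
  clear hk
  induction k with
  | zero =>
    intro g
    refine ⟨LinearPMap.mem_ppow_zero_domain _ _, ?_⟩
    rw [LinearPMap.ppow_zero_apply, LinearPMap.ppow_zero_apply]
  | succ k ih =>
    intro g
    obtain ⟨hg, hfg⟩ := (LinearPMap.mem_ppow_succ_domain_iff N.adjoint k).mp g.2
    obtain ⟨hmk, hvk⟩ := ih ⟨(g : K), hg⟩
    set w : N.adjoint.domain := ⟨N.adjoint.ppow k ⟨(g : K), hg⟩, hfg⟩ with hw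
    obtain ⟨hm1, hv1⟩ := key w
    have h2 : T.adjoint.ppow k ⟨P (g : K), hmk⟩ ∈ T.adjoint.domain := by
      rw [hvk]; exact hm1
    have hmem : P (g : K) ∈ (T.adjoint.ppow (k + 1)).domain :=
      (LinearPMap.mem_ppow_succ_domain_iff T.adjoint k).mpr ⟨hmk, h2⟩
    refine ⟨hmem, ?_⟩
    rw [LinearPMap.ppow_succ_apply T.adjoint k hmk h2 hmem]
    have e1 : T.adjoint ⟨T.adjoint.ppow k ⟨P (g : K), hmk⟩, h2⟩
        = T.adjoint ⟨P (w : K), hm1⟩ :=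
      LinearPMap.pmap_congr _ _ _ hvk
    rw [e1, hv1]
    have e2 : N.adjoint.ppow (k + 1) g = N.adjoint w :=
      LinearPMap.ppow_succ_apply N.adjoint k hg hfg g.2
    rw [e2]
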